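/- Let n ≥ 1, let M and N be finite abelian groups killed by n with a nondegenerate bilinear pairing e : M × N → ℤ/nℤ, and let σ ∈ Aut(M), τ ∈ Aut(N) satisfy e(σx, τy) = e(x,y). Let S = M^σ = {x ∈ M : σx = x} and S^⊥ = {y ∈ N : e(x,y) = 0 for all x ∈ S}. If (σ−1)²M = 0, then τ = 1 on S^⊥ and S^⊥ = (τ−1)N. -/

import Mathlib

/-- The number of homomorphisms `ZMod k →+ ZMod n` is at most `k`. -/
lemma aux_card_zmod_hom_le (n k : ℕ) (hn : 0 < n) (hk : 0 < k) :
    Nat.card (ZMod k →+ ZMod n) ≤ k := by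
  haveI : NeZero n := ⟨hn.ne'⟩
  haveI : NeZero k := ⟨hk.ne'⟩
  have hdvd : ∀ f : ZMod k →+ ZMod n, n ∣ k * (f 1).val := by
    intro f
    have h1 : k • (f 1) = 0 := by
      rw [← map_nsmul]
      have : (k : ℕ) • (1 : ZMod k) = ((k : ℕ) : ZMod k) := by
        rw [nsmul_eq_mul, mul_one]
      rw [this, ZMod.natCast_self, map_zero]
    have h2 : ((k * (f 1).val : ℕ) : ZMod n) = 0 := by
      push_cast
      rw [ZMod.natCast_zmod_val, ← nsmul_eq_mul, h1]
    exact (ZMod.natCast_eq_zero_iff _ _).mp h2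
  let F : (ZMod k →+ ZMod n) → Fin k := fun f =>
    ⟨k * (f 1).val / n, by
      apply Nat.div_lt_of_lt_mul
      calc k * (f 1).val < k * n := by
            exact (Nat.mul_lt_mul_left hk).mpr (ZMod.val_lt _)
        _ = n * k := Nat.mul_comm _ _⟩
  have hFinj : Function.Injective F := by
    intro f g hfg
    have h1 : k * (f 1).val / n = k * (g 1).val / n := congrArg Fin.val hfg
    have h2 : k * (f 1).val = k * (g 1).val := by
      have hf := Nat.div_mul_cancel (hdvd f)
      have hg := Nat.div_mul_cancel (hdvd g)
      rw [← hf, ← hg, h1]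
    have h3 : (f 1).val = (g 1).val := Nat.eq_of_mul_eq_mul_left hk h2
    have h4 : f 1 = g 1 := ZMod.val_injective n h3
    ext x
    have hx : x = (x.val : ZMod k) := (ZMod.natCast_zmod_val x).symm
    rw [hx]
    have : ((x.val : ℕ) : ZMod k) = (x.val : ℕ) • (1 : ZMod k) := by
      rw [nsmul_eq_mul, mul_one]
    rw [this, map_nsmul, map_nsmul, h4]
  calc Nat.card (ZMod k →+ ZMod n) ≤ Nat.card (Fin k) :=
        Nat.card_le_card_of_injective F hFinj
    _ = k := by simp

/-- For a finite abelian group `A`, `#Hom(A, ZMod n) ≤ #A`. -/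
lemma aux_card_hom_le (n : ℕ) (hn : 0 < n) (A : Type*) [AddCommGroup A] [Finite A] :
    Nat.card (A →+ ZMod n) ≤ Nat.card A := by
  obtain ⟨ι, hι, k, hk, ⟨eA⟩⟩ := AddCommGroup.equiv_directSum_zmod_of_finite' A
  classical
  have e1 : (A →+ ZMod n) ≃ ∀ i, (ZMod (k i) →+ ZMod n) :=
    { toFun := fun f i => (f.comp eA.symm.toAddMonoidHom).comp (DirectSum.of (fun i => ZMod (k i)) i)
      invFun := fun φ => (DirectSum.toAddMonoid φ).comp eA.toAddMonoidHom
      left_inv := by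
        intro f
        have h : DirectSum.toAddMonoid
            (fun i => (f.comp eA.symm.toAddMonoidHom).comp (DirectSum.of (fun i => ZMod (k i)) i)) =
            f.comp eA.symm.toAddMonoidHom := by
          apply DirectSum.addHom_ext'
          intro i
          ext x
          simp [DirectSum.toAddMonoid_of]
        ext a
        show DirectSum.toAddMonoid
            (fun i => (f.comp eA.symm.toAddMonoidHom).comp (DirectSum.of (fun i => ZMod (k i)) i))
            (eA a) = f a
        rw [h]
        simp
      right_inv := by
        intro φ
        funext i
        ext x
        simp [DirectSum.toAddMonoid_of] }
  have e2 : A ≃ ∀ i, ZMod (k i) :=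
    eA.toEquiv.trans (DFinsupp.equivFunOnFintype)
  calc Nat.card (A →+ ZMod n) = ∏ i, Nat.card (ZMod (k i) →+ ZMod n) := by
        rw [Nat.card_congr e1, Nat.card_pi]
    _ ≤ ∏ i, k i := by
        apply Finset.prod_le_prod
        · intro i _; exact Nat.zero_le _
        · intro i _; exact aux_card_zmod_hom_le n (k i) hn (Nat.lt_of_lt_of_le Nat.one_pos (hk i).le)
    _ = Nat.card A := by
        rw [Nat.card_congr e2, Nat.card_pi]
        congr 1
        funext i
        rw [Nat.card_zmod]

lemma aux_finite_hom (n : ℕ) [NeZero n] (A : Type*) [AddMonoid A] [Finite A] :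
    Finite (A →+ ZMod n) :=
  Finite.of_injective (fun f : A →+ ZMod n => (f : A → ZMod n)) DFunLike.coe_injective

theorem stmt_7 (n : ℕ) (hn : 1 ≤ n)
    (M N : Type*) [AddCommGroup M] [AddCommGroup N] [Finite M] [Finite N]
    (hM : ∀ x : M, n • x = 0) (hN : ∀ y : N, n • y = 0)
    (e : M →+ N →+ ZMod n)
    (hnd1 : ∀ x : M, (∀ y : N, e x y = 0) → x = 0)
    (hnd2 : ∀ y : N, (∀ x : M, e x y = 0) → y = 0)
    (σ : M ≃+ M) (τ : N ≃+ N)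
    (hcompat : ∀ x : M, ∀ y : N, e (σ x) (τ y) = e x y)
    (hσ : ∀ x : M, σ (σ x) - 2 • σ x + x = 0) :
    (∀ y : N, (∀ x : M, σ x = x → e x y = 0) → τ y = y) ∧
      (∀ y : N, (∀ x : M, σ x = x → e x y = 0) ↔ ∃ z : N, y = τ z - z) := by
  classical
  haveI : NeZero n := ⟨by omega⟩

  set f : M →+ M := σ.toAddMonoidHom - AddMonoidHom.id M with hfdef
  set g : N →+ N := τ.toAddMonoidHom - AddMonoidHom.id N with hgdef
  haveI := aux_finite_hom n M
  haveI := aux_finite_hom n N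
  haveI := aux_finite_hom n (M ⧸ f.range)
  haveI := aux_finite_hom n (M ⧸ f.ker)
  have hf_apply : ∀ x : M, f x = σ x - x := fun x => rfl
  have hg_apply : ∀ y : N, g y = τ y - y := fun y => rfl
  -- (σ - 1)^2 = 0
  have hff : ∀ x : M, f (f x) = 0 := by
    intro x
    have h1 : f (f x) = σ (σ x) - 2 • σ x + x := by
      rw [hf_apply, hf_apply, map_sub, two_smul]
      abel
    rw [h1, hσ]
  -- (σ - 1) M consists of fixed points
  have hDS : ∀ x : M, σ (f x) = f x := by
    intro x
    have := hff x
    rw [hf_apply (f x)] at this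
    exact sub_eq_zero.mp this
  have key1 : ∀ (x : M) (y : N), e x (τ y) = e (σ.symm x) y := by
    intro x y
    have := hcompat (σ.symm x) y
    rwa [σ.apply_symm_apply] at this
  -- Part 1
  have part1 : ∀ y : N, (∀ x : M, σ x = x → e x y = 0) → τ y = y := by
    intro y hy
    have h1 : ∀ x : M, e x (τ y - y) = 0 := by
      intro x
      have h3 : σ.symm x - x = -(f (σ.symm x)) := by
        rw [hf_apply, σ.apply_symm_apply, neg_sub]
      have h4 : e (f (σ.symm x)) y = 0 := hy _ (hDS _)
      rw [map_sub, key1, ← AddMonoidHom.sub_apply, ← map_sub, h3, map_neg,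
        AddMonoidHom.neg_apply, h4, neg_zero]
    exact sub_eq_zero.mp (hnd2 _ h1)
  -- Easy inclusion
  have easy2 : ∀ z : N, ∀ x : M, σ x = x → e x (τ z - z) = 0 := by
    intro z x hx
    have hx' : σ.symm x = x := by
      conv_lhs => rw [← hx]
      exact σ.symm_apply_apply x
    rw [map_sub, key1, hx', sub_self]
  -- The subgroup S^⊥
  let Sp : AddSubgroup N :=
    { carrier := {y : N | ∀ x : M, σ x = x → e x y = 0}
      zero_mem' := fun x _ => map_zero (e x)
      add_mem' := by
        intro a b ha hb x hx
        rw [map_add, ha x hx, hb x hx, add_zero]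
      neg_mem' := by
        intro a ha x hx
        rw [map_neg, ha x hx, neg_zero] }
  have hTSp : (g.range : Set N) ⊆ (Sp : Set N) := by
    rintro _ ⟨z, rfl⟩
    intro x hx
    rw [hg_apply]
    exact easy2 z x hx
  -- #M = #N
  have hMN : Nat.card M = Nat.card N := by
    have h1 : Nat.card M ≤ Nat.card N := by
      have hinj : Function.Injective (fun x : M => e x) := by
        intro x x' hxx'
        have : x - x' = 0 := hnd1 _ (fun y => by
          rw [map_sub, AddMonoidHom.sub_apply, show e x = e x' from hxx', sub_self])
        exact sub_eq_zero.mp this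
      exact le_trans (Nat.card_le_card_of_injective _ hinj) (aux_card_hom_le n hn N)
    have h2 : Nat.card N ≤ Nat.card M := by
      have hinj : Function.Injective (fun y : N => e.flip y) := by
        intro y y' hyy'
        have : y - y' = 0 := hnd2 _ (fun x => by
          have := congrArg (fun φ : M →+ ZMod n => φ x) hyy'
          simp only [AddMonoidHom.flip_apply] at this
          rw [map_sub, this, sub_self])
        exact sub_eq_zero.mp this
      exact le_trans (Nat.card_le_card_of_injective _ hinj) (aux_card_hom_le n hn M)
    omega
  have hposM : ∀ (H : AddSubgroup M), 0 < Nat.card H := fun H => Nat.card_pos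
  have hposN : ∀ (H : AddSubgroup N), 0 < Nat.card H := fun H => Nat.card_pos
  -- Step A : #ker g ≤ #ker f
  have hstepA : Nat.card g.ker ≤ Nat.card f.ker := by
    have hkill : ∀ y : g.ker, ∀ x ∈ f.range, e.flip (y : N) x = 0 := by
      rintro ⟨y, hy⟩ _ ⟨w, rfl⟩
      have hty : τ y = y := by
        have : g y = 0 := hy
        rw [hg_apply] at this
        exact sub_eq_zero.mp this
      simp only [AddMonoidHom.flip_apply]
      rw [hf_apply, map_sub, AddMonoidHom.sub_apply]
      have : e (σ w) y = e w y := by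
        conv_lhs => rw [← hty]
        exact hcompat w y
      rw [this, sub_self]
    let Φ : g.ker → (M ⧸ f.range →+ ZMod n) := fun y =>
      QuotientAddGroup.lift f.range (e.flip (y : N)) (hkill y)
    have hΦinj : Function.Injective Φ := by
      intro y y' h
      have hall : ∀ x : M, e x (y : N) = e x (y' : N) := by
        intro x
        have := congrArg (fun φ : M ⧸ f.range →+ ZMod n =>
          φ (QuotientAddGroup.mk x)) h
        exact this
      have : (y : N) - (y' : N) = 0 := hnd2 _ (fun x => by
        rw [map_sub, hall x, sub_self])
      exact Subtype.ext (sub_eq_zero.mp this)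
    have h1 : Nat.card g.ker ≤ Nat.card (M ⧸ f.range) :=
      le_trans (Nat.card_le_card_of_injective Φ hΦinj) (aux_card_hom_le n hn _)
    -- #(M ⧸ f.range) = #f.ker
    have h2 : Nat.card M = Nat.card (M ⧸ f.range) * Nat.card f.range :=
      AddSubgroup.card_eq_card_quotient_mul_card_addSubgroup _
    have h3 : Nat.card M = Nat.card f.range * Nat.card f.ker := by
      have := AddSubgroup.card_eq_card_quotient_mul_card_addSubgroup f.ker
      rwa [Nat.card_congr (QuotientAddGroup.quotientKerEquivRange f).toEquiv] at this
    have h4 : Nat.card (M ⧸ f.range) = Nat.card f.ker := by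
      have := h2.symm.trans h3
      exact Nat.eq_of_mul_eq_mul_left (hposM f.range)
        (by rw [Nat.mul_comm (Nat.card (M ⧸ f.range)) _] at this; exact this)
    omega
  -- Step B : #Sp ≤ #(M ⧸ f.ker)
  have hstepB : Nat.card Sp ≤ Nat.card (M ⧸ f.ker) := by
    have hkill : ∀ y : Sp, ∀ x ∈ f.ker, e.flip (y : N) x = 0 := by
      rintro ⟨y, hy⟩ x hx
      have hfix : σ x = x := by
        have : f x = 0 := hx
        rw [hf_apply] at this
        exact sub_eq_zero.mp this
      exact hy x hfix
    let Ψ : Sp → (M ⧸ f.ker →+ ZMod n) := fun y =>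
      QuotientAddGroup.lift f.ker (e.flip (y : N)) (hkill y)
    have hΨinj : Function.Injective Ψ := by
      intro y y' h
      have hall : ∀ x : M, e x (y : N) = e x (y' : N) := by
        intro x
        have := congrArg (fun φ : M ⧸ f.ker →+ ZMod n =>
          φ (QuotientAddGroup.mk x)) h
        exact this
      have : (y : N) - (y' : N) = 0 := hnd2 _ (fun x => by
        rw [map_sub, hall x, sub_self])
      exact Subtype.ext (sub_eq_zero.mp this)
    exact le_trans (Nat.card_le_card_of_injective Ψ hΨinj) (aux_card_hom_le n hn _)
  -- conclude : #Sp ≤ #g.range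
  have hcards : Nat.card Sp ≤ Nat.card g.range := by
    have hMf : Nat.card M = Nat.card f.range * Nat.card f.ker := by
      have := AddSubgroup.card_eq_card_quotient_mul_card_addSubgroup f.ker
      rwa [Nat.card_congr (QuotientAddGroup.quotientKerEquivRange f).toEquiv] at this
    have hNg : Nat.card N = Nat.card g.range * Nat.card g.ker := by
      have := AddSubgroup.card_eq_card_quotient_mul_card_addSubgroup g.ker
      rwa [Nat.card_congr (QuotientAddGroup.quotientKerEquivRange g).toEquiv] at this
    have hquot : Nat.card (M ⧸ f.ker) = Nat.card f.range :=
      Nat.card_congr (QuotientAddGroup.quotientKerEquivRange f).toEquiv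
    -- #f.range ≤ #g.range
    have hrange : Nat.card f.range ≤ Nat.card g.range := by
      have h1 : Nat.card f.range * Nat.card g.ker ≤ Nat.card f.range * Nat.card f.ker :=
        Nat.mul_le_mul_left _ hstepA
      have h2 : Nat.card g.range * Nat.card g.ker = Nat.card f.range * Nat.card f.ker := by
        rw [← hNg, ← hMf, hMN]
      have h3 : Nat.card f.range * Nat.card g.ker ≤ Nat.card g.range * Nat.card g.ker := by
        omega
      exact Nat.le_of_mul_le_mul_right h3 (hposN g.ker)
    calc Nat.card Sp ≤ Nat.card (M ⧸ f.ker) := hstepB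
      _ = Nat.card f.range := hquot
      _ ≤ Nat.card g.range := hrange
  -- set equality
  have hseteq : (g.range : Set N) = (Sp : Set N) := by
    apply Set.eq_of_subset_of_ncard_le hTSp
    rw [← Nat.card_coe_set_eq, ← Nat.card_coe_set_eq]
    exact hcards
  refine ⟨part1, fun y => ⟨fun hy => ?_, ?_⟩⟩
  · have : y ∈ (g.range : Set N) := by
      rw [hseteq]
      exact hy
    obtain ⟨z, hz⟩ := this
    exact ⟨z, by rw [← hz, hg_apply]⟩
  · rintro ⟨z, rfl⟩ x hx
    exact easy2 z x hx
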